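/- Let H̃ be a map assigning to each finite network (X, A_X) a quasi-ultrametric ũ_X on X, satisfying: (Ã1) for every two-node network ({p,q}, A) with A(p,q) = α > 0 and A(q,p) = β > 0 the output equals the input, and (Ã2) for every dissimilarity-reducing map φ : (X, A_X) → (Y, A_Y) one has ũ_X(x,x') ≥ ũ_Y(φ(x), φ(x')). Then for every network (X, A_X) and all x, x' ∈ X, ũ_X(x,x') equals the directed minimum chain cost ũ*_X(x,x') = min over chains from x to x' of the maximum link dissimilarity. -/
import Mathlib


/-- The cost of a chain: maximum dissimilarity over consecutive links. -/
def chainCost {X : Type*} (A : X → X → ℝ) : List X → ℝ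
  | [] => 0
  | [_] => 0
  | a :: b :: rest => max (A a b) (chainCost A (b :: rest))

/-- The directed minimum chain cost `ũ*` of a network `(X, A)`: the minimum,
over all chains from `x` to `x'`, of the maximum link dissimilarity. -/
noncomputable def dmcc {X : Type*} (A : X → X → ℝ) (x x' : X) : ℝ :=
  sInf {r | ∃ c : List X, c.head? = some x ∧ c.getLast? = some x' ∧ chainCost A c = r}

section aux
variable {X : Type*} {A : X → X → ℝ}

lemma chainCost_cons_cons (a b : X) (rest : List X) :
    chainCost A (a :: b :: rest) = max (A a b) (chainCost A (b :: rest)) := rfl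

lemma chainCost_nonneg (h : ∀ x x', 0 ≤ A x x') : ∀ c, 0 ≤ chainCost A c
  | [] => le_refl 0
  | [_] => le_refl 0
  | _ :: b :: rest =>
      le_trans (chainCost_nonneg h (b :: rest)) (le_max_right _ _)

lemma chainCost_mem : ∀ c : List X, chainCost A c = 0 ∨ ∃ a b, chainCost A c = A a b
  | [] => Or.inl rfl
  | [_] => Or.inl rfl
  | a :: b :: rest => by
      rcases max_choice (A a b) (chainCost A (b :: rest)) with h | h
      · exact Or.inr ⟨a, b, h⟩
      · rw [chainCost_cons_cons, h]; exact chainCost_mem (b :: rest)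

def chainSet (A : X → X → ℝ) (x x' : X) : Set ℝ :=
  {r | ∃ c : List X, c.head? = some x ∧ c.getLast? = some x' ∧ chainCost A c = r}

lemma chainSet_nonempty (x x' : X) : (chainSet A x x').Nonempty :=
  ⟨chainCost A [x, x'], [x, x'], rfl, rfl, rfl⟩

lemma chainSet_bddBelow (h : ∀ x x', 0 ≤ A x x') (x x' : X) :
    BddBelow (chainSet A x x') :=
  ⟨0, fun _ ⟨c, _, _, hc⟩ => hc ▸ chainCost_nonneg h c⟩

lemma chainSet_finite [Finite X] (x x' : X) : (chainSet A x x').Finite := by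
  apply Set.Finite.subset (((Set.finite_range fun p : X × X => A p.1 p.2).insert 0))
  rintro r ⟨c, _, _, hc⟩
  subst hc
  rcases chainCost_mem c with h | ⟨a, b, h⟩
  · exact Set.mem_insert_iff.mpr (Or.inl h)
  · exact Set.mem_insert_iff.mpr (Or.inr ⟨(a, b), h.symm⟩)

lemma dmcc_mem [Finite X] (x x' : X) : dmcc A x x' ∈ chainSet A x x' :=
  Set.Nonempty.csInf_mem (chainSet_nonempty x x') (chainSet_finite x x')

lemma dmcc_le_chainCost (h : ∀ x x', 0 ≤ A x x') {x x' : X} {c : List X}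
    (h1 : c.head? = some x) (h2 : c.getLast? = some x') :
    dmcc A x x' ≤ chainCost A c :=
  csInf_le (chainSet_bddBelow h x x') ⟨c, h1, h2, rfl⟩

lemma dmcc_nonneg (h : ∀ x x', 0 ≤ A x x') (x x' : X) : 0 ≤ dmcc A x x' :=
  le_csInf (chainSet_nonempty x x') (fun _ ⟨c, _, _, hc⟩ => hc ▸ chainCost_nonneg h c)

lemma dmcc_self (h : ∀ x x', 0 ≤ A x x') (x : X) : dmcc A x x = 0 :=
  le_antisymm (dmcc_le_chainCost h (c := [x]) rfl rfl) (dmcc_nonneg h x x)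

lemma dmcc_le (h : ∀ x x', 0 ≤ A x x') (x x' : X) : dmcc A x x' ≤ A x x' := by
  have := dmcc_le_chainCost h (c := [x, x']) (x := x) (x' := x') rfl rfl
  simpa [chainCost, max_eq_left (h x x')] using this

lemma le_chainCost_of_ne {m : ℝ} (hm : ∀ z z', z ≠ z' → m ≤ A z z') :
    ∀ (c : List X) {a b : X}, c.head? = some a → c.getLast? = some b → a ≠ b →
      m ≤ chainCost A c
  | [], a, b, h1, _, _ => by simp at h1
  | [z], a, b, h1, h2, hab => by
      simp at h1 h2; exact absurd (h1.symm.trans h2) hab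
  | z :: w :: rest, a, b, h1, h2, hab => by
      simp only [List.head?_cons, Option.some.injEq] at h1
      subst h1
      by_cases hzw : z = w
      · subst hzw
        have h2' : (z :: rest).getLast? = some b := by
          rw [← h2]; exact List.getLast?_cons_cons.symm
        exact le_trans (le_chainCost_of_ne hm (z :: rest) rfl h2' hab)
          (le_max_right _ _)
      · exact le_trans (hm z w hzw) (le_max_left _ _)

lemma chainCost_append (c2 : List X) :
    ∀ (c1 : List X) {y : X}, c1.getLast? = some y →
      chainCost A (c1 ++ c2) ≤ max (chainCost A c1) (chainCost A (y :: c2))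
  | [], y, h => by simp at h
  | [a], y, h => by
      simp at h; subst h
      simp only [List.singleton_append]
      exact le_max_right _ _
  | a :: b :: rest, y, h => by
      have h' : (b :: rest).getLast? = some y := by
        rw [← h]; exact List.getLast?_cons_cons.symm
      have ih := chainCost_append c2 (b :: rest) h'
      calc chainCost A ((a :: b :: rest) ++ c2)
          = max (A a b) (chainCost A ((b :: rest) ++ c2)) := rfl
        _ ≤ max (A a b) (max (chainCost A (b :: rest)) (chainCost A (y :: c2))) :=
            max_le_max_left _ ih
        _ = max (chainCost A (a :: b :: rest)) (chainCost A (y :: c2)) := by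
            rw [chainCost_cons_cons, max_assoc]

lemma dmcc_triangle [Finite X] (h : ∀ x x', 0 ≤ A x x') (x y z : X) :
    dmcc A x z ≤ max (dmcc A x y) (dmcc A y z) := by
  obtain ⟨c1, hc1h, hc1l, hc1⟩ := dmcc_mem (A := A) x y
  obtain ⟨c2, hc2h, hc2l, hc2⟩ := dmcc_mem (A := A) y z
  obtain ⟨c2t, rfl⟩ : ∃ t, c2 = y :: t := by
    cases c2 with
    | nil => simp at hc2h
    | cons a t => simp at hc2h; exact ⟨t, by rw [hc2h]⟩
  have hle : dmcc A x z ≤ chainCost A (c1 ++ c2t) := by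
    apply dmcc_le_chainCost h
    · cases c1 with
      | nil => simp at hc1h
      | cons a t => simpa using hc1h
    · cases c2t with
      | nil =>
          simp only [List.getLast?_singleton, Option.some.injEq] at hc2l
          rw [List.append_nil, hc1l, hc2l]
      | cons b t =>
          rw [List.getLast?_append_of_ne_nil _ (by simp)]
          rw [← hc2l]; exact List.getLast?_cons_cons.symm
  calc dmcc A x z ≤ max (chainCost A c1) (chainCost A (y :: c2t)) :=
        le_trans hle (chainCost_append c2t c1 hc1l)
    _ = max (dmcc A x y) (dmcc A y z) := by rw [hc1, hc2]

lemma exists_sep [Fintype X] (hnn : ∀ x x', 0 ≤ A x x')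
    (hz : ∀ x x', A x x' = 0 ↔ x = x') {x x' : X} (hne : x ≠ x') :
    ∃ m : ℝ, 0 < m ∧ ∀ z z', z ≠ z' → m ≤ A z z' := by
  classical
  set s : Finset (X × X) := Finset.univ.filter (fun p => p.1 ≠ p.2) with hs
  have hsne : s.Nonempty := ⟨(x, x'), by simp [hs, hne]⟩
  refine ⟨s.inf' hsne (fun p => A p.1 p.2), ?_, ?_⟩
  · rw [Finset.lt_inf'_iff]
    rintro ⟨z, z'⟩ hzz
    simp only [hs, Finset.mem_filter, Finset.mem_univ, true_and] at hzz
    exact lt_of_le_of_ne (hnn z z') (fun e => hzz ((hz z z').mp e.symm))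
  · intro z z' h
    refine Finset.inf'_le (fun p : X × X => A p.1 p.2) (b := (z, z')) ?_
    simp only [hs, Finset.mem_filter, Finset.mem_univ, true_and]
    exact h

lemma dmcc_pos [Fintype X] (hnn : ∀ x x', 0 ≤ A x x')
    (hz : ∀ x x', A x x' = 0 ↔ x = x') {x x' : X} (hne : x ≠ x') :
    0 < dmcc A x x' := by
  obtain ⟨m, hm0, hm⟩ := exists_sep hnn hz hne
  have : m ≤ dmcc A x x' :=
    le_csInf (chainSet_nonempty x x') (fun r ⟨c, h1, h2, hc⟩ =>
      hc ▸ le_chainCost_of_ne hm c h1 h2 hne)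
  linarith

lemma chainCost_ge {u : X → X → ℝ} (hself : ∀ a, u a a = 0)
    (htri : ∀ a b c, u a c ≤ max (u a b) (u b c)) (hle : ∀ a b, u a b ≤ A a b) :
    ∀ (c : List X) {a b : X}, c.head? = some a → c.getLast? = some b →
      u a b ≤ chainCost A c
  | [], a, b, h1, _ => by simp at h1
  | [z], a, b, h1, h2 => by
      simp at h1 h2; subst h1; subst h2
      exact le_of_eq (hself _)
  | z :: w :: rest, a, b, h1, h2 => by
      simp only [List.head?_cons, Option.some.injEq] at h1
      subst h1
      have h2' : (w :: rest).getLast? = some b := by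
        rw [← h2]; exact List.getLast?_cons_cons.symm
      calc u z b ≤ max (u z w) (u w b) := htri z w b
        _ ≤ max (A z w) (chainCost A (w :: rest)) :=
            max_le_max (hle z w) (chainCost_ge hself htri hle (w :: rest) rfl h2')
        _ = chainCost A (z :: w :: rest) := rfl

end aux

/-- Any hierarchical quasi-clustering method satisfying the
Directed Axiom of Value and the Directed Axiom of Transformation coincides
with directed single linkage (the directed minimum chain cost). -/
theorem quasiClustering_uniqueness
    (H : ∀ (X : Type) [Fintype X], (X → X → ℝ) → X → X → ℝ)
    -- H outputs quasi-ultrametrics on every network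
    (hvalid : ∀ (X : Type) [Fintype X] (A : X → X → ℝ),
      (∀ x x', 0 ≤ A x x') → (∀ x x', A x x' = 0 ↔ x = x') →
      (∀ x x', 0 ≤ H X A x x') ∧ (∀ x x', H X A x x' = 0 ↔ x = x') ∧
      (∀ x x' x'', H X A x x' ≤ max (H X A x x'') (H X A x'' x')))
    -- (Ã1) Directed Axiom of Value: on two-node networks the output is the input
    (hA1 : ∀ (X : Type) [Fintype X] (A : X → X → ℝ),
      (∀ x x', 0 ≤ A x x') → (∀ x x', A x x' = 0 ↔ x = x') →
      ∀ p q : X, p ≠ q → (∀ z : X, z = p ∨ z = q) →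
      ∀ x x', H X A x x' = A x x')
    -- (Ã2) Directed Axiom of Transformation
    (hA2 : ∀ (X Y : Type) [Fintype X] [Fintype Y]
      (AX : X → X → ℝ) (AY : Y → Y → ℝ),
      (∀ x x', 0 ≤ AX x x') → (∀ x x', AX x x' = 0 ↔ x = x') →
      (∀ y y', 0 ≤ AY y y') → (∀ y y', AY y y' = 0 ↔ y = y') →
      ∀ φ : X → Y, (∀ x x', AY (φ x) (φ x') ≤ AX x x') →
      ∀ x x', H Y AY (φ x) (φ x') ≤ H X AX x x') :
    ∀ (X : Type) [Fintype X] (A : X → X → ℝ),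
      (∀ x x', 0 ≤ A x x') → (∀ x x', A x x' = 0 ↔ x = x') →
      ∀ x x' : X, H X A x x' = dmcc A x x' := by
  intro X _ A hnn hz x x'
  classical
  obtain ⟨Hnn, Hz, Htri⟩ := hvalid X A hnn hz
  -- Key: H is bounded by A pointwise
  have key : ∀ a b : X, H X A a b ≤ A a b := by
    intro a b
    by_cases hab : a = b
    · subst hab
      rw [(Hz a a).mpr rfl]
      exact hnn a a
    · have hab1 : A a b ≠ 0 := fun e => hab ((hz a b).mp e)
      have hab2 : A b a ≠ 0 := fun e => hab ((hz b a).mp e).symm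
      set Δ : Bool → Bool → ℝ :=
        fun s t => if s = t then 0 else if s = false then A a b else A b a with hΔ
      have hΔnn : ∀ s t, 0 ≤ Δ s t := by
        intro s t
        simp only [hΔ]
        split
        · exact le_refl 0
        · split
          · exact hnn a b
          · exact hnn b a
      have hΔz : ∀ s t, Δ s t = 0 ↔ s = t := by
        intro s t
        cases s <;> cases t <;> simp [hΔ, hab1, hab2]
      set φ : Bool → X := fun s => if s = false then a else b with hφ
      have hred : ∀ s t, A (φ s) (φ t) ≤ Δ s t := by
        intro s t
        cases s <;> cases t <;>
          simp [hφ, hΔ, le_of_eq ((hz _ _).mpr rfl)]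
      have h2 := hA2 Bool X Δ A hΔnn hΔz hnn hz φ hred false true
      have h1 := hA1 Bool Δ hΔnn hΔz false true (by decide)
        (fun z => by cases z <;> simp) false true
      have hφf : φ false = a := by simp [hφ]
      have hφt : φ true = b := by simp [hφ]
      have hΔft : Δ false true = A a b := by simp [hΔ]
      rw [hφf, hφt, h1, hΔft] at h2
      exact h2
  -- Direction 1:  H ≤ dmcc
  have dir1 : H X A x x' ≤ dmcc A x x' := by
    refine le_csInf (chainSet_nonempty x x') ?_
    rintro r ⟨c, h1, h2, hc⟩
    exact hc ▸ chainCost_ge (fun a => (Hz a a).mpr rfl)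
      (fun a b c => Htri a c b) key c h1 h2
  -- Direction 2:  dmcc ≤ H
  have dir2 : dmcc A x x' ≤ H X A x x' := by
    by_cases hxx : x = x'
    · subst hxx
      rw [dmcc_self hnn, (Hz x x).mpr rfl]
    · obtain ⟨m, hm0, hm⟩ := exists_sep hnn hz hxx
      set δ := dmcc A x x' with hδdef
      have hδ0 : 0 < δ := dmcc_pos hnn hz hxx
      set Δ : Bool → Bool → ℝ :=
        fun s t => if s = t then 0 else if s = false then δ else m with hΔ
      have hΔnn : ∀ s t, 0 ≤ Δ s t := by
        intro s t
        simp only [hΔ]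
        split
        · exact le_refl 0
        · split
          · exact le_of_lt hδ0
          · exact le_of_lt hm0
      have hΔz : ∀ s t, Δ s t = 0 ↔ s = t := by
        intro s t
        cases s <;> cases t <;> simp [hΔ, ne_of_gt hδ0, ne_of_gt hm0]
      set ψ : X → Bool := fun z => if dmcc A x z < δ then false else true with hψ
      have hψval : ∀ z, (ψ z = false ↔ dmcc A x z < δ) := by
        intro z
        simp only [hψ]
        by_cases h : dmcc A x z < δ
        · simp [h]
        · simp [h]
      have hred : ∀ z z', Δ (ψ z) (ψ z') ≤ A z z' := by
        intro z z'
        by_cases he : ψ z = ψ z'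
        · simp only [hΔ, he, if_pos rfl]
          exact hnn z z'
        · have hzz' : z ≠ z' := fun e => he (e ▸ rfl)
          cases hc1 : ψ z
          · -- ψ z = false, ψ z' = true
            have hc2 : ψ z' = true := by
              cases hc2 : ψ z' with
              | false => exact absurd (hc1.trans hc2.symm) he
              | true => rfl
            have hlt : dmcc A x z < δ := (hψval z).mp hc1
            have hge : ¬ dmcc A x z' < δ := by
              intro hlt'
              exact absurd ((hψval z').mpr hlt') (by simp [hc2])
            push_neg at hge
            have htr : dmcc A x z' ≤ max (dmcc A x z) (dmcc A z z') :=
              dmcc_triangle hnn x z z'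
            have hAzz : dmcc A z z' ≤ A z z' := dmcc_le hnn z z'
            have : δ ≤ A z z' := by
              rcases max_cases (dmcc A x z) (dmcc A z z') with ⟨he', _⟩ | ⟨he', _⟩ <;>
                rw [he'] at htr <;> linarith
            simpa [hΔ, hc1, hc2] using this
          · -- ψ z = true, ψ z' = false
            have : m ≤ A z z' := hm z z' hzz'
            have hc2 : ψ z' = false := by
              cases hc2 : ψ z' with
              | false => rfl
              | true => exact absurd (hc1.trans hc2.symm) he
            simpa [hΔ, hc1, hc2] using this
      have h2 := hA2 X Bool A Δ hnn hz hΔnn hΔz ψ hred x x'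
      have h1 := hA1 Bool Δ hΔnn hΔz false true (by decide)
        (fun z => by cases z <;> simp) false true
      have hψx : ψ x = false := (hψval x).mpr (by rw [dmcc_self hnn]; exact hδ0)
      have hψx' : ψ x' = true := by
        cases hc : ψ x'
        · exact absurd ((hψval x').mp hc) (by simp [hδdef])
        · rfl
      rw [hψx, hψx', h1] at h2
      simpa [hΔ] using h2
  exact le_antisymm dir1 dir2
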